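/- Let α > 0 and define K₂(x) = (√2/√π) ∫₀^∞ y e^{−|x|y}/(α² + y²) dy for x ≠ 0. Then lim_{|x|→∞} x² K₂(x) = (√2/√π)·(1/α²). -/

import Mathlib

open MeasureTheory Filter

/-- For α > 0 and K₂(x) = (√2/√π) ∫₀^∞ y e^{−|x|y}/(α² + y²) dy,
    one has x²K₂(x) → (√2/√π)·(1/α²) as |x| → ∞. -/
theorem stmt_17 (α : ℝ) (hα : 0 < α) :
    Tendsto (fun x : ℝ => x ^ 2 *
        ((Real.sqrt 2 / Real.sqrt Real.pi) *
          ∫ y in Set.Ioi (0 : ℝ), y * Real.exp (-|x| * y) / (α ^ 2 + y ^ 2)))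
      (cocompact ℝ) (nhds ((Real.sqrt 2 / Real.sqrt Real.pi) * (1 / α ^ 2))) := by
  set c := Real.sqrt 2 / Real.sqrt Real.pi with hc
  -- the integrable dominating function
  have hfun : (fun x : ℝ => Real.exp (-x) * x ^ ((2:ℝ) - 1)) =
      fun x => x * Real.exp (-x) := by
    funext x
    norm_num [Real.rpow_one, mul_comm]
  have hΓ : IntegrableOn (fun s : ℝ => s * Real.exp (-s)) (Set.Ioi 0) := by
    have h := Real.GammaIntegral_convergent (s := 2) (by norm_num)
    rwa [hfun] at h
  have hΓval : (∫ s in Set.Ioi (0 : ℝ), s * Real.exp (-s)) = 1 := by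
    have h := (Real.Gamma_eq_integral (s := 2) (by norm_num)).symm
    rw [Real.Gamma_two, hfun] at h
    exact h
  -- substitution lemma
  have key : ∀ t : ℝ, 0 < t →
      t ^ 2 * ∫ y in Set.Ioi (0:ℝ), y * Real.exp (-t * y) / (α ^ 2 + y ^ 2)
      = ∫ s in Set.Ioi (0:ℝ), s * Real.exp (-s) / (α ^ 2 + (s / t) ^ 2) := by
    intro t ht
    have hsub := integral_comp_mul_left_Ioi
        (fun s => s * Real.exp (-s) / (α ^ 2 + (s / t) ^ 2)) 0 ht
    simp only [mul_zero] at hsub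
    have heq : ∀ y : ℝ,
        (t * y) * Real.exp (-(t * y)) / (α ^ 2 + ((t * y) / t) ^ 2)
        = t * (y * Real.exp (-t * y) / (α ^ 2 + y ^ 2)) := by
      intro y
      rw [mul_div_cancel_left₀ _ ht.ne', neg_mul]
      ring
    rw [show (fun y : ℝ => (t * y) * Real.exp (-(t * y)) / (α ^ 2 + ((t * y) / t) ^ 2))
        = fun y : ℝ => t * (y * Real.exp (-t * y) / (α ^ 2 + y ^ 2)) from funext heq,
      MeasureTheory.integral_const_mul, smul_eq_mul] at hsub
    have : t ^ 2 * ∫ y in Set.Ioi (0:ℝ), y * Real.exp (-t * y) / (α ^ 2 + y ^ 2)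
        = t * (t * ∫ y in Set.Ioi (0:ℝ), y * Real.exp (-t * y) / (α ^ 2 + y ^ 2)) := by ring
    rw [this, hsub, ← mul_assoc, mul_inv_cancel₀ ht.ne', one_mul]
  -- dominated convergence
  have hlim : Tendsto (fun t : ℝ => ∫ s in Set.Ioi (0:ℝ),
      s * Real.exp (-s) / (α ^ 2 + (s / t) ^ 2)) atTop
      (nhds (∫ s in Set.Ioi (0:ℝ), s * Real.exp (-s) / α ^ 2)) := by
    have hα2 : (0:ℝ) < α ^ 2 := by positivity
    apply tendsto_integral_filter_of_dominated_convergence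
        (fun s => s * Real.exp (-s) / α ^ 2)
    · filter_upwards with t
      apply Continuous.aestronglyMeasurable
      apply Continuous.div (by continuity)
      · continuity
      · intro s
        have : (0:ℝ) ≤ (s / t) ^ 2 := sq_nonneg _
        nlinarith
    · filter_upwards with t
      rw [ae_restrict_iff' measurableSet_Ioi]
      filter_upwards with s hs
      have hs0 : (0:ℝ) < s := hs
      have hnum : 0 ≤ s * Real.exp (-s) := by positivity
      have hden : (0:ℝ) < α ^ 2 + (s / t) ^ 2 := by nlinarith [sq_nonneg (s / t)]
      rw [Real.norm_eq_abs, abs_of_nonneg (by positivity)]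
      apply div_le_div_of_nonneg_left hnum hα2
      nlinarith [sq_nonneg (s / t)]
    · exact (hΓ.div_const _)
    · filter_upwards with s
      have h1 : Tendsto (fun t : ℝ => s / t) atTop (nhds 0) :=
        Tendsto.div_atTop tendsto_const_nhds tendsto_id
      have h2 : Tendsto (fun t : ℝ => α ^ 2 + (s / t) ^ 2) atTop (nhds (α ^ 2)) := by
        have := (h1.pow 2)
        simpa using tendsto_const_nhds.add this
      exact Tendsto.div tendsto_const_nhds h2 hα2.ne'
  have hval : (∫ s in Set.Ioi (0:ℝ), s * Real.exp (-s) / α ^ 2) = 1 / α ^ 2 := by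
    rw [integral_div, hΓval]
  rw [hval] at hlim
  -- the atTop limit for t ↦ t² c I(t)
  have hg : Tendsto (fun t : ℝ => t ^ 2 *
      (c * ∫ y in Set.Ioi (0:ℝ), y * Real.exp (-t * y) / (α ^ 2 + y ^ 2)))
      atTop (nhds (c * (1 / α ^ 2))) := by
    apply Tendsto.congr' _ (hlim.const_mul c)
    filter_upwards [eventually_gt_atTop (0:ℝ)] with t ht
    rw [← key t ht]; ring
  have habs : Tendsto (fun x : ℝ => |x|) (cocompact ℝ) atTop := by
    exact tendsto_norm_cocompact_atTop (E := ℝ)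
  have := hg.comp habs
  simpa only [Function.comp_def, sq_abs] using this
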